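/- If a tuple o = (o₁,…,o_{n+1}) is a canonical form, then its parent (o₁,…,o_n) is also a canonical form (or ⊥ when n = 0). -/

import Mathlib

/-- Objects built inductively from atoms by finite tuples and finite sets
(a set node carries the list of its elements). -/
inductive Obj (A : Type) : Type
  | atom : A → Obj A
  | tup  : List (Obj A) → Obj A
  | sett : List (Obj A) → Obj A

/-- Applying a map on atoms to an object, recursively. -/
def Obj.applyPerm {A : Type} (π : A → A) : Obj A → Obj A
  | .atom a => .atom (π a)
  | .tup l => .tup (l.attach.map (fun o => Obj.applyPerm π o.1))
  | .sett l => .sett (l.attach.map (fun o => Obj.applyPerm π o.1))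
decreasing_by all_goals (have := List.sizeOf_lt_of_mem o.2; simp at this ⊢; omega)

/-- The list of atoms occurring in an object. -/
def Obj.atomsList {A : Type} : Obj A → List A
  | .atom a => [a]
  | .tup l => l.attach.flatMap (fun o => Obj.atomsList o.1)
  | .sett l => l.attach.flatMap (fun o => Obj.atomsList o.1)
decreasing_by all_goals (have := List.sizeOf_lt_of_mem o.2; simp at this ⊢; omega)

/-- The set of atoms occurring in an object. -/
def Obj.atoms {A : Type} (o : Obj A) : Set A := {a | a ∈ o.atomsList}

/-- Well-formed objects: the element lists of set nodes are strictly sorted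
(so they faithfully represent finite sets, listed in increasing order). -/
def Obj.WF {A : Type} [LinearOrder (Obj A)] : Obj A → Prop
  | .atom _ => True
  | .tup l => ∀ o ∈ l, Obj.WF o
  | .sett l => l.Pairwise (· < ·) ∧ ∀ o ∈ l, Obj.WF o

/-- Applying a map on atoms to an object, recursively; the element list of a
set node is re-sorted, so that set nodes keep representing sets. -/
def Obj.applyPermS {A : Type} [LinearOrder (Obj A)] (π : A → A) : Obj A → Obj A
  | .atom a => .atom (π a)
  | .tup l => .tup (l.attach.map (fun o => Obj.applyPermS π o.1))
  | .sett l => .sett ((l.attach.map (fun o => Obj.applyPermS π o.1)).mergeSort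
      (fun a b => decide (a ≤ b)))
decreasing_by all_goals (have := List.sizeOf_lt_of_mem o.2; simp at this ⊢; omega)


lemma applyPermS_tup {A : Type} [LinearOrder (Obj A)] (π : A → A) (l : List (Obj A)) :
    (Obj.tup l).applyPermS π = Obj.tup (l.map (Obj.applyPermS π)) := by
  rw [Obj.applyPermS]
  simp

lemma lex_append_singleton {α : Type*} {r : α → α → Prop} :
    ∀ (a b : List α), a.length = b.length → ∀ x y : α,
      List.Lex r (a ++ [x]) (b ++ [y]) → List.Lex r a b ∨ a = b
  | [], [], _, x, y, _ => Or.inr rfl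
  | h :: t, h' :: t', hlen, x, y, hlex => by
    simp only [List.cons_append] at hlex
    cases hlex with
    | rel hr => exact Or.inl (List.Lex.rel hr)
    | cons hl =>
      rcases lex_append_singleton t t' (by simpa using hlen) x y hl with h1 | h1
      · exact Or.inl (List.Lex.cons h1)
      · exact Or.inr (by rw [h1])

/-- if a tuple (o₁,…,o_{n+1}) is a canonical form (≤ all its
images under allowed permutations), then its parent (o₁,…,o_n) is too. -/
theorem parent_of_canonical_tuple {A : Type} [LinearOrder A] [LinearOrder (Obj A)] [WellFoundedLT (Obj A)]
    (hatom : ∀ a b : A, Obj.atom a < Obj.atom b ↔ a < b)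
    (htup : ∀ l₁ l₂ : List (Obj A), l₁.length = l₂.length →
        (Obj.tup l₁ < Obj.tup l₂ ↔ List.Lex (· < ·) l₁ l₂))
    (hsett : ∀ l₁ l₂ : List (Obj A), l₁.Pairwise (· < ·) → l₂.Pairwise (· < ·) →
        (Obj.sett l₁ < Obj.sett l₂ ↔ List.Lex (· < ·) l₁ l₂))
    (uset : A → Set A) (h1 : ∀ a, a ∈ uset a)
    (h2 : ∀ a b, uset a = uset b ∨ uset a ∩ uset b = ∅)
    (l : List (Obj A)) (x : Obj A) (hwf : (Obj.tup (l ++ [x])).WF)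
    (hcan : ∀ π : Equiv.Perm A, (∀ a, π a ∈ uset a) →
      Obj.tup (l ++ [x]) ≤ (Obj.tup (l ++ [x])).applyPermS π) :
    ∀ π : Equiv.Perm A, (∀ a, π a ∈ uset a) →
      Obj.tup l ≤ (Obj.tup l).applyPermS π := by
  intro π hπ
  have key := hcan π hπ
  rw [applyPermS_tup] at key ⊢
  rw [List.map_append] at key
  rcases eq_or_lt_of_le key with heq | hlt
  · have : l ++ [x] = l.map (Obj.applyPermS π) ++ [Obj.applyPermS π x] := by
      injection heq
    have := (List.append_inj this (by simp)).1
    rw [← this]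
  · have hlex := (htup _ _ (by simp)).1 hlt
    rcases lex_append_singleton l (l.map (Obj.applyPermS π)) (by simp) _ _ hlex with h | h
    · exact le_of_lt ((htup _ _ (by simp)).2 h)
    · rw [← h]
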